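/- For the truncated Michaelis-Menten vector field F(x) = (-k₁x₁x₃+k₂x₂, k₁x₁x₃-k₂x₂, -k₁x₁x₃+k₂x₂) and the conservation laws Φ(x) = (x₁+x₂, x₂+x₃), the Jacobian of the stacked map (F, Φ) has rank 3 at every point with x₁,x₂,x₃ > 0 and k₁,k₂ > 0 satisfying -k₁x₁x₃+k₂x₂ = 0; in particular, the 3×3 minor det(D_x(-k₁x₁x₃+k₂x₂, x₁+x₂, x₂+x₃)) = -k₂ - k₁x₁ - k₁x₃ is nonzero. -/

import Mathlib

/-- Completeness of the conservation laws of the truncated Michaelis–Menten system: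
the Jacobian of (F, Φ) has rank 3 at every positive steady state, and the 3×3 minor
det D_x(-k₁x₁x₃+k₂x₂, x₁+x₂, x₂+x₃) = -k₂ - k₁x₁ - k₁x₃ ≠ 0. -/
theorem michaelisMenten_conservation_complete
    (k₁ k₂ x₁ x₂ x₃ : ℝ) (hk₁ : 0 < k₁) (hk₂ : 0 < k₂)
    (hx₁ : 0 < x₁) (hx₂ : 0 < x₂) (hx₃ : 0 < x₃)
    (hss : -k₁ * x₁ * x₃ + k₂ * x₂ = 0) :
    (Matrix.rank
      (![![-k₁ * x₃, k₂, -k₁ * x₁],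
         ![k₁ * x₃, -k₂, k₁ * x₁],
         ![-k₁ * x₃, k₂, -k₁ * x₁],
         ![1, 1, 0],
         ![0, 1, 1]] : Matrix (Fin 5) (Fin 3) ℝ) = 3) ∧
    (Matrix.det
      (![![-k₁ * x₃, k₂, -k₁ * x₁],
         ![1, 1, 0],
         ![0, 1, 1]] : Matrix (Fin 3) (Fin 3) ℝ) = -k₂ - k₁ * x₁ - k₁ * x₃) ∧
    (-k₂ - k₁ * x₁ - k₁ * x₃ ≠ 0) := by
  refine ⟨?_, ?_, ?_⟩
  · set M : Matrix (Fin 5) (Fin 3) ℝ :=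
      ![![-k₁ * x₃, k₂, -k₁ * x₁],
        ![k₁ * x₃, -k₂, k₁ * x₁],
        ![-k₁ * x₃, k₂, -k₁ * x₁],
        ![1, 1, 0],
        ![0, 1, 1]] with hM
    have hinj : Function.Injective M.mulVecLin := by
      rw [injective_iff_map_eq_zero]
      intro v hv
      have h0 := congrFun hv 0
      have h3 := congrFun hv 3
      have h4 := congrFun hv 4
      simp only [Matrix.mulVecLin_apply] at h0 h3 h4
      simp [hM, Matrix.mulVecLin_apply, Matrix.mulVec, dotProduct,
        Fin.sum_univ_three] at h0 h3 h4
      have hv0 : v 0 = 0 := by nlinarith [mul_pos hk₁ hx₁, mul_pos hk₁ hx₃]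
      funext i
      fin_cases i <;> simp_all <;> linarith
    rw [Matrix.rank, LinearMap.finrank_range_of_inj hinj]
    simp
  · erw [Matrix.det_fin_three]
    simp [Matrix.det_fin_three, Matrix.vecHead, Matrix.vecTail]
    ring
  · have := mul_pos hk₁ hx₁
    have := mul_pos hk₁ hx₃
    intro h; linarith
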